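/- Let n = 4z+2 with z ≥ 1 and H the 3-hypergraph with edges {x_1,x_2,x_3}, {x_3,x_4,x_5}, ..., {x_{n-3},x_{n-2},x_{n-1}}, {x_{n-1},x_n,x_1}. Then the tuple A with a_i = 1 for i odd and a_i = 0 for i even is a 2-cover of H that is not a sum of two 1-covers, but for every k ≤ n, A + e_k is a sum of two 1-covers of H. -/

import Mathlib

open MvPolynomial Finset

noncomputable section

/-- A `k`-cover of a hypergraph with edge set `E`: a nonzero tuple whose entries
sum to at least `k` over every edge. -/
def IsCover {V : Type*} (E : Finset (Finset V)) (k : ℕ) (a : V → ℕ) : Prop :=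
  a ≠ 0 ∧ ∀ e ∈ E, k ≤ ∑ i ∈ e, a i

/-- `a` is a sum of two 1-covers. -/
def SumTwoOneCovers {V : Type*} (E : Finset (Finset V)) (a : V → ℕ) : Prop :=
  ∃ b c : V → ℕ, IsCover E 1 b ∧ IsCover E 1 c ∧ a = b + c

/-- An independent set: no edge is contained in `S`. -/
def IsIndep {V : Type*} (E : Finset (Finset V)) (S : Finset V) : Prop :=
  ∀ e ∈ E, ¬ e ⊆ S

/-- `i` is in the neighborhood of `S`: `i ∉ S` and some edge consists of `i`
together with vertices of `S`. -/
def InNbhd {V : Type*} (E : Finset (Finset V)) (S : Finset V) (i : V) : Prop :=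
  i ∉ S ∧ ∃ e ∈ E, i ∈ e ∧ ∀ j ∈ e, j ≠ i → j ∈ S

open Classical in
/-- The 2-cover `A_S` attached to an independent set `S`:
`0` on `S`, `2` on `N(S)`, and `1` elsewhere. -/
noncomputable def indepCover {V : Type*} (E : Finset (Finset V)) (S : Finset V) : V → ℕ :=
  fun i => if i ∈ S then 0 else if InNbhd E S i then 2 else 1

/-- The Alexander dual of the edge ideal: `⋂_{edges e} (x_i : i ∈ e)`. -/
noncomputable def dualIdeal {V : Type*} (K : Type*) [Field K] (E : Finset (Finset V)) :
    Ideal (MvPolynomial V K) :=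
  ⨅ e ∈ E, Ideal.span (X '' (e : Set V))

/-- The monomial `x_1^{a_1} ⋯ x_n^{a_n}` attached to a tuple `a`. -/
noncomputable def coverMonomial {V : Type*} [Fintype V] (K : Type*) [Field K] (a : V → ℕ) :
    MvPolynomial V K :=
  ∏ i, X i ^ a i

/-- Connectedness of a hypergraph: any two vertices are linked by a chain of
vertices in which consecutive vertices share an edge. -/
def HConnected {V : Type*} (E : Finset (Finset V)) : Prop :=
  ∀ x y : V, ∃ l : List V, l.head? = some x ∧ l.getLast? = some y ∧
    l.Chain' fun a b => ∃ e ∈ E, a ∈ e ∧ b ∈ e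

/-- The cyclic 3-hypergraph with edges `{x_1,x_2,x_3}, {x_3,x_4,x_5}, …`
(0-based: `{2j, 2j+1, 2j+2}` modulo `n`). -/
def cyc3 (n : ℕ) (hn : 0 < n) : Finset (Finset (Fin n)) :=
  (Finset.range ((n + 1) / 2)).image fun j =>
    ({⟨(2 * j) % n, Nat.mod_lt _ hn⟩, ⟨(2 * j + 1) % n, Nat.mod_lt _ hn⟩,
      ⟨(2 * j + 2) % n, Nat.mod_lt _ hn⟩} : Finset (Fin n))

/-- The alternating tuple: `1` on odd vertices `x_1, x_3, …` (0-based even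
indices), `0` on even vertices. -/
def altCover (n : ℕ) : Fin n → ℕ :=
  fun i => if (i : ℕ) % 2 = 0 then 1 else 0

private lemma fin_mk_eq {n u v : ℕ} (hu : u < n) (hv : v < n) (h : u = v) :
    (⟨u, hu⟩ : Fin n) = ⟨v, hv⟩ := by subst h; rfl

private lemma sum_triple {α : Type*} [DecidableEq α] (a : α → ℕ) (x y w : α)
    (h1 : x ≠ y) (h2 : x ≠ w) (h3 : y ≠ w) :
    ∑ i ∈ ({x, y, w} : Finset α), a i = a x + a y + a w := by
  rw [Finset.sum_insert (by simp [h1, h2]), Finset.sum_insert (by simp [h3]),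
    Finset.sum_singleton, Nat.add_assoc]

private lemma sum_cyc3 {n z : ℕ} (hz : 1 ≤ z) (hn : n = 4 * z + 2) (a : Fin n → ℕ) (k : ℕ) :
    (∀ e ∈ cyc3 n (hn ▸ Nat.succ_pos _), k ≤ ∑ i ∈ e, a i) ↔
      ∀ j : ℕ, (hj : j < 2 * z + 1) →
        k ≤ a ⟨2 * j, by omega⟩ + a ⟨2 * j + 1, by omega⟩ +
            a ⟨(2 * j + 2) % n, Nat.mod_lt _ (by omega)⟩ := by
  have h0 : 0 < n := by omega
  have key : ∀ j : ℕ, (hj : j < 2 * z + 1) →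
      ∑ i ∈ ({⟨2 * j % n, Nat.mod_lt _ h0⟩, ⟨(2 * j + 1) % n, Nat.mod_lt _ h0⟩,
          ⟨(2 * j + 2) % n, Nat.mod_lt _ h0⟩} : Finset (Fin n)), a i
        = a ⟨2 * j, by omega⟩ + a ⟨2 * j + 1, by omega⟩ +
            a ⟨(2 * j + 2) % n, Nat.mod_lt _ (by omega)⟩ := by
    intro j hj
    have h1 : 2 * j % n = 2 * j := Nat.mod_eq_of_lt (by omega)
    have h2 : (2 * j + 1) % n = 2 * j + 1 := Nat.mod_eq_of_lt (by omega)
    have hw : ((2 * j + 2) % n = 0 ∧ j = 2 * z) ∨ ((2 * j + 2) % n = 2 * j + 2 ∧ j < 2 * z) := by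
      rcases Nat.lt_or_ge j (2 * z) with h | h
      · exact Or.inr ⟨Nat.mod_eq_of_lt (by omega), h⟩
      · have hj' : j = 2 * z := by omega
        subst hj'
        refine Or.inl ⟨?_, rfl⟩
        rw [show 2 * (2 * z) + 2 = n from by omega, Nat.mod_self]
    refine (sum_triple a _ _ _ ?_ ?_ ?_).trans ?_
    · intro hEq; simp only [Fin.mk.injEq] at hEq; omega
    · intro hEq; simp only [Fin.mk.injEq] at hEq; rcases hw with ⟨hw, h⟩ | ⟨hw, h⟩ <;> omega
    · intro hEq; simp only [Fin.mk.injEq] at hEq; rcases hw with ⟨hw, h⟩ | ⟨hw, h⟩ <;> omega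
    rw [congrArg a (fin_mk_eq _ _ h1 : (⟨2 * j % n, Nat.mod_lt _ h0⟩ : Fin n) = ⟨2 * j, by omega⟩),
      congrArg a (fin_mk_eq _ _ h2 : (⟨(2 * j + 1) % n, Nat.mod_lt _ h0⟩ : Fin n) = ⟨2 * j + 1, by omega⟩)]
  constructor
  · intro h j hj
    have hmem : ({⟨2 * j % n, Nat.mod_lt _ h0⟩, ⟨(2 * j + 1) % n, Nat.mod_lt _ h0⟩,
        ⟨(2 * j + 2) % n, Nat.mod_lt _ h0⟩} : Finset (Fin n)) ∈ cyc3 n (by omega) := by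
      simp only [cyc3, Finset.mem_image, Finset.mem_range]
      exact ⟨j, by omega, rfl⟩
    exact le_of_le_of_eq (h _ hmem) (key j hj)
  · intro h e he
    simp only [cyc3, Finset.mem_image, Finset.mem_range] at he
    obtain ⟨j, hj, rfl⟩ := he
    exact le_of_le_of_eq (h j (by omega)) (key j (by omega)).symm

/-- 1 at even vertices whose node is at even cyclic distance from node `s`. -/
private def bCov (n z s : ℕ) : Fin n → ℕ := fun i =>
  if i.val % 2 = 1 then 0 else
  if (if s ≤ i.val / 2 then i.val / 2 - s else i.val / 2 + (2 * z + 1) - s) % 2 = 0 then 1 else 0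

private def bOdd (n z kv s : ℕ) : Fin n → ℕ := fun i =>
  if i.val = kv then 1 else
  if i.val % 2 = 1 then 0 else
  if (if s ≤ i.val / 2 then i.val / 2 - s else i.val / 2 + (2 * z + 1) - s) % 2 = 0 then 0 else 1

private def cEven (n z kv : ℕ) : Fin n → ℕ := fun i =>
  if i.val % 2 = 1 then 0 else
  if (if kv / 2 ≤ i.val / 2 then i.val / 2 - kv / 2 else i.val / 2 + (2 * z + 1) - kv / 2) % 2 = 0
    then (if i.val = kv then 1 else 0) else 1

set_option maxHeartbeats 4000000 in
theorem stmt13 {n z : ℕ} (hz : 1 ≤ z) (hn : n = 4 * z + 2) :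
    IsCover (cyc3 n (by omega)) 2 (altCover n) ∧
      ¬ SumTwoOneCovers (cyc3 n (by omega)) (altCover n) ∧
      ∀ k : Fin n, SumTwoOneCovers (cyc3 n (by omega)) (altCover n + Pi.single k 1) := by
  have h0 : 0 < n := by omega
  have hwgen : ∀ j : ℕ, j < 2 * z + 1 →
      ((2 * j + 2) % n = 0 ∧ j = 2 * z) ∨ ((2 * j + 2) % n = 2 * j + 2 ∧ j < 2 * z) := by
    intro j hj
    rcases Nat.lt_or_ge j (2 * z) with h | h
    · exact Or.inr ⟨Nat.mod_eq_of_lt (by omega), h⟩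
    · have hj' : j = 2 * z := by omega
      subst hj'
      refine Or.inl ⟨?_, rfl⟩
      rw [show 2 * (2 * z) + 2 = n from by omega, Nat.mod_self]
  refine ⟨⟨?_, ?_⟩, ?_, ?_⟩
  · -- altCover nonzero
    intro h
    have := congrFun h ⟨0, by omega⟩
    simp [altCover] at this
  · -- altCover is a 2-cover
    refine (sum_cyc3 hz hn _ 2).2 ?_
    intro j hj
    have hw := hwgen j hj
    simp only [altCover, Fin.val_mk]
    split_ifs <;> omega
  · -- not a sum of two 1-covers
    rintro ⟨b, c, ⟨-, hb⟩, ⟨-, hc⟩, habc⟩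
    have hb' := (sum_cyc3 hz hn b 1).1 hb
    have hc' := (sum_cyc3 hz hn c 1).1 hc
    have hpt : ∀ i : Fin n, b i + c i = altCover n i := fun i => (congrFun habc i).symm
    obtain ⟨B, hBdef⟩ : ∃ B : ℕ → ℕ, ∀ t, B t = b ⟨2 * t % n, Nat.mod_lt _ h0⟩ :=
      ⟨_, fun t => rfl⟩
    obtain ⟨C, hCdef⟩ : ∃ C : ℕ → ℕ, ∀ t, C t = c ⟨2 * t % n, Nat.mod_lt _ h0⟩ :=
      ⟨_, fun t => rfl⟩
    have emk : ∀ (j : ℕ) (hj : j < 2 * z + 1),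
        (⟨2 * j % n, Nat.mod_lt _ h0⟩ : Fin n) = ⟨2 * j, by omega⟩ :=
      fun j hj => fin_mk_eq _ _ (Nat.mod_eq_of_lt (by omega))
    have emk2 : ∀ j : ℕ,
        (⟨2 * (j + 1) % n, Nat.mod_lt _ h0⟩ : Fin n) = ⟨(2 * j + 2) % n, Nat.mod_lt _ h0⟩ :=
      fun j => fin_mk_eq _ _ (by rw [show 2 * (j + 1) = 2 * j + 2 from by ring])
    have hmid : ∀ (j : ℕ) (hj : j < 2 * z + 1),
        b ⟨2 * j + 1, by omega⟩ = 0 ∧ c ⟨2 * j + 1, by omega⟩ = 0 := by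
      intro j hj
      have h2 := hpt ⟨2 * j + 1, by omega⟩
      have h3 : altCover n ⟨2 * j + 1, by omega⟩ = 0 := by
        simp only [altCover, Fin.val_mk]
        rw [if_neg (by omega)]
      omega
    have hBstep : ∀ j : ℕ, j < 2 * z + 1 → 1 ≤ B j + B (j + 1) := by
      intro j hj
      have h1 := hb' j hj
      have h2 := (hmid j hj).1
      rw [hBdef j, hBdef (j + 1), emk j hj, emk2 j]
      omega
    have hCstep : ∀ j : ℕ, j < 2 * z + 1 → 1 ≤ C j + C (j + 1) := by
      intro j hj
      have h1 := hc' j hj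
      have h2 := (hmid j hj).2
      rw [hCdef j, hCdef (j + 1), emk j hj, emk2 j]
      omega
    have hBC : ∀ j : ℕ, j < 2 * z + 1 → B j + C j = 1 := by
      intro j hj
      have h2 := hpt ⟨2 * j, by omega⟩
      have h3 : altCover n ⟨2 * j, by omega⟩ = 1 := by
        simp only [altCover, Fin.val_mk]
        rw [if_pos (by omega)]
      rw [hBdef j, hCdef j, emk j hj]
      omega
    have hwrapval : 2 * (2 * z + 1) % n = 2 * 0 % n := by
      rw [show 2 * (2 * z + 1) = n from by omega, Nat.mod_self,
        show 2 * 0 = 0 from rfl, Nat.zero_mod]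
    have hBwrap : B (2 * z + 1) = B 0 := by
      rw [hBdef, hBdef]; exact congrArg b (fin_mk_eq _ _ hwrapval)
    have hCwrap : C (2 * z + 1) = C 0 := by
      rw [hCdef, hCdef]; exact congrArg c (fin_mk_eq _ _ hwrapval)
    have main : ∀ j : ℕ, j ≤ 2 * z → B j % 2 = (B 0 + j) % 2 := by
      intro j
      induction j with
      | zero => intro _; simp
      | succ i ih =>
        intro hile
        have h1 := hBstep i (by omega)
        have h2 := hCstep i (by omega)
        have h3 := hBC i (by omega)
        have h4 := hBC (i + 1) (by omega)
        have h5 := ih (by omega)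
        omega
    have h1 := hBstep (2 * z) (by omega)
    have h2 := hCstep (2 * z) (by omega)
    have h3 := hBC (2 * z) (by omega)
    have h4 := hBC 0 (by omega)
    have h5 := main (2 * z) le_rfl
    rw [hBwrap] at h1
    rw [hCwrap] at h2
    omega
  · -- adding any e_k gives a sum of two 1-covers
    intro k
    have hkn : (k : ℕ) < n := k.2
    by_cases hk : (k : ℕ) % 2 = 0
    · -- k even
      refine ⟨bCov n z ((k : ℕ) / 2), cEven n z (k : ℕ), ⟨?_, ?_⟩, ⟨?_, ?_⟩, ?_⟩
      · intro h
        have := congrFun h k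
        simp only [bCov, Pi.zero_apply] at this
        split_ifs at this <;> omega
      · refine (sum_cyc3 hz hn _ 1).2 ?_
        intro j hj
        have hw := hwgen j hj
        simp only [bCov, Fin.val_mk]
        split_ifs <;> omega
      · intro h
        have := congrFun h k
        simp only [cEven, Pi.zero_apply] at this
        split_ifs at this <;> omega
      · refine (sum_cyc3 hz hn _ 1).2 ?_
        intro j hj
        have hw := hwgen j hj
        simp only [cEven, Fin.val_mk]
        split_ifs <;> omega
      · funext i
        have hin : (i : ℕ) < n := i.2
        simp only [Pi.add_apply, Pi.single_apply, altCover, bCov, cEven, Fin.ext_iff]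
        split_ifs <;> omega
    · -- k odd
      obtain ⟨s, hs⟩ : ∃ s : ℕ, ((k : ℕ) / 2 = 2 * z ∧ s = 0) ∨
          ((k : ℕ) / 2 ≠ 2 * z ∧ s = (k : ℕ) / 2 + 1) := by
        by_cases h : (k : ℕ) / 2 = 2 * z
        · exact ⟨0, Or.inl ⟨h, rfl⟩⟩
        · exact ⟨(k : ℕ) / 2 + 1, Or.inr ⟨h, rfl⟩⟩
      have hslt : 2 * s < n := by omega
      refine ⟨bOdd n z (k : ℕ) s, bCov n z s, ⟨?_, ?_⟩, ⟨?_, ?_⟩, ?_⟩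
      · intro h
        have := congrFun h k
        simp only [bOdd, Pi.zero_apply] at this
        split_ifs at this <;> omega
      · refine (sum_cyc3 hz hn _ 1).2 ?_
        intro j hj
        have hw := hwgen j hj
        simp only [bOdd, Fin.val_mk]
        split_ifs <;> omega
      · intro h
        have := congrFun h ⟨2 * s, hslt⟩
        simp only [bCov, Pi.zero_apply, Fin.val_mk] at this
        split_ifs at this <;> omega
      · refine (sum_cyc3 hz hn _ 1).2 ?_
        intro j hj
        have hw := hwgen j hj
        simp only [bCov, Fin.val_mk]
        split_ifs <;> omega
      · funext i
        have hin : (i : ℕ) < n := i.2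
        simp only [Pi.add_apply, Pi.single_apply, altCover, bOdd, bCov, Fin.ext_iff]
        split_ifs <;> omega
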